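/- arXiv:2203.04788 — 3 statements merged into one kernel-verified Lean document; each statement's English description precedes it below -/
import Mathlib

section
/- For every n, there exist Boolean functions f_1, f_2 on n variables (n even) such that some switch-list representations of f_1 and f_2 have size at most 2n, but every switch-list representation of f_1 ∧ f_2 (over any variable order) has size at least n·(2^{n/2+1} − 3). -/
/-- The number encoding an assignment `a` with respect to variable order `π`:
the variable in position `i` of `π` gets bit-weight `2^(n-1-i)`, so earlier
positions are more significant. -/
def numOf {n : ℕ} (π : Equiv.Perm (Fin n)) (a : Fin n → Bool) : ℕ :=
  ∑ i : Fin n, if a (π i) then 2 ^ (n - 1 - (i : ℕ)) else 0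

/-- The assignment encoded by the number `b` with respect to variable order `π`. -/
def asgOf {n : ℕ} (π : Equiv.Perm (Fin n)) (b : ℕ) : Fin n → Bool :=
  fun x => b.testBit (n - 1 - ((π.symm x : Fin n) : ℕ))

/-- The set of switches of a Boolean function `f` on `n` variables with respect
to the variable order `π`: all `b ∈ {1, …, 2^n - 1}` where the value changes. -/
def switches (n : ℕ) (π : Equiv.Perm (Fin n)) (f : (Fin n → Bool) → Bool) : Finset ℕ :=
  (Finset.Ico 1 (2 ^ n)).filter fun b => f (asgOf π b) ≠ f (asgOf π (b - 1))

open Finset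

/-- trailing-ones structure of `c` vs `c+1` -/
lemma succ_bits (c : ℕ) : ∃ k : ℕ,
    (∀ j < k, c.testBit j = true ∧ (c + 1).testBit j = false) ∧
    c.testBit k = false ∧ (c + 1).testBit k = true ∧
    ∀ j, k < j → c.testBit j = (c + 1).testBit j := by
  induction c using Nat.strong_induction_on with
  | _ c ih =>
  rcases Nat.even_or_odd c with hc | hc
  · have h2 : c % 2 = 0 := Nat.even_iff.mp hc
    refine ⟨0, by omega, by simp [Nat.testBit_zero]; omega, by simp [Nat.testBit_zero]; omega, ?_⟩
    rintro (_ | i) hj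
    · omega
    · rw [Nat.testBit_add_one, Nat.testBit_add_one]
      congr 1
      omega
  · have h2 : c % 2 = 1 := Nat.odd_iff.mp hc
    obtain ⟨k, ha, hb, hcc, hd⟩ := ih (c / 2) (by omega)
    have e1 : (c + 1) / 2 = c / 2 + 1 := by omega
    refine ⟨k + 1, ?_, ?_, ?_, ?_⟩
    · rintro (_ | i) hj
      · constructor
        · simp [Nat.testBit_zero]; omega
        · simp [Nat.testBit_zero]; omega
      · rw [Nat.testBit_add_one, Nat.testBit_add_one, e1]
        exact ha i (by omega)
    · rw [Nat.testBit_add_one]; exact hb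
    · rw [Nat.testBit_add_one, e1]; exact hcc
    · rintro (_ | i) hj
      · omega
      · rw [Nat.testBit_add_one, Nat.testBit_add_one, e1]
        exact hd i (by omega)

lemma bit0_ne (c : ℕ) : (c + 1).testBit 0 ≠ c.testBit 0 := by
  simp only [Nat.testBit_zero, ne_eq, decide_eq_decide]
  omega

lemma sum_testBit : ∀ (n b : ℕ), b < 2 ^ n →
    (∑ j ∈ Finset.range n, if b.testBit j then 2 ^ j else 0) = b := by
  intro n
  induction n with
  | zero => intro b hb; interval_cases b <;> simp
  | succ n ih =>
    intro b hb
    rw [Finset.sum_range_succ']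
    have hpow : 2 ^ (n + 1) = 2 * 2 ^ n := by ring
    have h1 : ∀ j, (if b.testBit (j + 1) then 2 ^ (j + 1) else 0)
        = 2 * (if (b / 2).testBit j then 2 ^ j else 0) := by
      intro j
      rw [Nat.testBit_add_one]
      by_cases h : (b / 2).testBit j <;> simp [h] <;> ring
    simp only [h1]
    rw [← Finset.mul_sum, ih (b / 2) (by omega)]
    simp only [Nat.testBit_zero]
    by_cases h : b % 2 = 1 <;> simp [h] <;> omega

lemma sum_two_pow (n : ℕ) : (∑ j ∈ Finset.range n, 2 ^ j) = 2 ^ n - 1 := by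
  induction n with
  | zero => simp
  | succ n ih => rw [Finset.sum_range_succ, ih]; have : 0 < 2 ^ n := Nat.pow_pos (by norm_num); rw [pow_succ]; omega

lemma numOf_asgOf {n : ℕ} (π : Equiv.Perm (Fin n)) {b : ℕ} (hb : b < 2 ^ n) :
    numOf π (asgOf π b) = b := by
  unfold numOf asgOf
  simp only [Equiv.symm_apply_apply]
  rw [Fin.sum_univ_eq_sum_range (fun i => if b.testBit (n - 1 - i) then 2 ^ (n - 1 - i) else 0)]
  rw [Finset.sum_range_reflect (fun j => if b.testBit j then 2 ^ j else 0) n]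
  · -- after reflect, indices are n - 1 - j
    exact sum_testBit n b hb

lemma numOf_lt {n : ℕ} (π : Equiv.Perm (Fin n)) (a : Fin n → Bool) : numOf π a < 2 ^ n := by
  unfold numOf
  have h1 : (∑ i : Fin n, if a (π i) then 2 ^ (n - 1 - (i : ℕ)) else 0)
      ≤ ∑ i : Fin n, 2 ^ (n - 1 - (i : ℕ)) := by
    apply Finset.sum_le_sum
    intro i _
    split <;> simp
  have h2 : (∑ i : Fin n, 2 ^ (n - 1 - (i : ℕ))) = 2 ^ n - 1 := by
    rw [Fin.sum_univ_eq_sum_range (fun i => 2 ^ (n - 1 - i))]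
    rw [Finset.sum_range_reflect (fun j => 2 ^ j) n]
    exact sum_two_pow n
  have h3 : 0 < 2 ^ n := Nat.pow_pos (by norm_num)
  omega

lemma asgOf_numOf {n : ℕ} (π : Equiv.Perm (Fin n)) (a : Fin n → Bool) :
    asgOf π (numOf π a) = a := by
  classical
  have hinj : Set.InjOn (asgOf π) (Finset.range (2 ^ n)) := by
    intro b hb b' hb' h
    have := numOf_asgOf π (Finset.mem_range.mp hb)
    have := numOf_asgOf π (Finset.mem_range.mp hb')
    rw [← numOf_asgOf π (Finset.mem_range.mp hb), h, numOf_asgOf π (Finset.mem_range.mp hb')]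
  have himg : (Finset.range (2 ^ n)).image (asgOf π) = Finset.univ := by
    apply Finset.eq_univ_of_card
    rw [Finset.card_image_of_injOn hinj, Finset.card_range]
    simp [Fintype.card_fun]
  have ha : a ∈ (Finset.range (2 ^ n)).image (asgOf π) := by rw [himg]; exact Finset.mem_univ a
  obtain ⟨b, hb, hba⟩ := Finset.mem_image.mp ha
  rw [← hba, numOf_asgOf π (Finset.mem_range.mp hb), hba]

lemma exists_var {n : ℕ} (π : Equiv.Perm (Fin n)) {j : ℕ} (hj : j < n) :
    ∃ x : Fin n, ∀ b, asgOf π b x = b.testBit j := by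
  refine ⟨π ⟨n - 1 - j, by omega⟩, fun b => ?_⟩
  unfold asgOf
  rw [Equiv.symm_apply_apply]
  congr 1
  simp only
  omega

lemma asgOf_comp {n : ℕ} (π σ : Equiv.Perm (Fin n)) (b : ℕ) :
    asgOf (π.trans σ.symm) b = fun x => asgOf π b (σ x) := by
  funext x
  unfold asgOf
  rw [Equiv.symm_trans_apply, Equiv.symm_symm]

lemma switches_congr {n : ℕ} (π π' : Equiv.Perm (Fin n)) (f f' : (Fin n → Bool) → Bool)
    (h : ∀ b, f (asgOf π b) = f' (asgOf π' b)) : switches n π f = switches n π' f' := by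
  unfold switches
  apply Finset.filter_congr
  intro b _
  rw [h b, h (b - 1)]

def fA (n m : ℕ) : (Fin n → Bool) → Bool :=
  fun a => !decide (∀ i : Fin n, (i : ℕ) < m → a i = true)

def fB (n m : ℕ) : (Fin n → Bool) → Bool :=
  fun a => !decide (∀ i : Fin n, m ≤ (i : ℕ) → a i = true)

def σm (m : ℕ) (hm : 1 ≤ m) : Equiv.Perm (Fin (m + m)) :=
  haveI : NeZero (m + m) := ⟨by omega⟩
  Equiv.addLeft (⟨m, by omega⟩ : Fin (m + m))

lemma σm_lt (m : ℕ) (hm : 1 ≤ m) (x : Fin (m + m)) :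
    ((x : ℕ) < m ↔ m ≤ ((σm m hm x : Fin (m + m)) : ℕ)) := by
  have hx := x.isLt
  have hval : ((σm m hm x : Fin (m + m)) : ℕ) = (m + (x : ℕ)) % (m + m) := by
    simp [σm, Fin.add_def]
  rw [hval]
  rcases Nat.lt_or_ge (x : ℕ) m with h | h
  · rw [Nat.mod_eq_of_lt (by omega)]; omega
  · rw [Nat.mod_eq_sub_mod (by omega), Nat.mod_eq_of_lt (by omega)]; omega

lemma fB_comp (m : ℕ) (hm : 1 ≤ m) (a : Fin (m + m) → Bool) :
    fB (m + m) m a = fA (m + m) m (fun x => a (σm m hm x)) := by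
  unfold fA fB
  congr 1
  rw [decide_eq_decide]
  constructor
  · intro h i hi
    exact h _ ((σm_lt m hm i).mp hi)
  · intro h i hi
    have h1 : ((σm m hm).symm i : ℕ) < m :=
      (σm_lt m hm ((σm m hm).symm i)).mpr (by simpa using hi)
    have := h _ h1
    simpa using this

lemma fA_comp (m : ℕ) (hm : 1 ≤ m) (a : Fin (m + m) → Bool) :
    fA (m + m) m a = fB (m + m) m (fun x => a (σm m hm x)) := by
  unfold fA fB
  congr 1
  rw [decide_eq_decide]
  constructor
  · intro h i hi
    have h1 : ((σm m hm) i : ℕ) < m := by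
      by_contra hc
      have := (σm_lt m hm i).mpr (by omega)
      omega
    exact h _ h1
  · intro h i hi
    have h1 : m ≤ ((σm m hm).symm i : ℕ) := by
      by_contra hc
      have := (σm_lt m hm ((σm m hm).symm i)).mp (by omega)
      rw [Equiv.apply_symm_apply] at this
      omega
    have := h _ h1
    simpa using this

lemma asgOf_one {n : ℕ} (b : ℕ) (i : Fin n) :
    asgOf (1 : Equiv.Perm (Fin n)) b i = b.testBit (n - 1 - (i : ℕ)) := by
  simp [asgOf, Equiv.Perm.one_symm]

lemma P_num (m : ℕ) (hm : 1 ≤ m) {b : ℕ} (hb : b < 2 ^ (m + m)) :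
    (∀ i : Fin (m + m), (i : ℕ) < m → asgOf 1 b i = true) ↔ 2 ^ (m + m) - 2 ^ m ≤ b := by
  constructor
  · intro h
    have hbit : ∀ j ∈ Finset.Ico m (m + m), (if b.testBit j then 2 ^ j else 0) = 2 ^ j := by
      intro j hj
      rw [Finset.mem_Ico] at hj
      have hi : ((⟨m + m - 1 - j, by omega⟩ : Fin (m + m)) : ℕ) < m := by simp; omega
      have := h _ hi
      rw [asgOf_one] at this
      have he : m + m - 1 - ((⟨m + m - 1 - j, by omega⟩ : Fin (m + m)) : ℕ) = j := by
        simp; omega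
      rw [he] at this
      rw [this]
      simp
    have h1 : (∑ j ∈ Finset.Ico m (m + m), if b.testBit j then 2 ^ j else 0)
        = 2 ^ (m + m) - 2 ^ m := by
      have hsplit : ((∑ j ∈ Finset.range m, 2 ^ j) + ∑ j ∈ Finset.Ico m (m + m), 2 ^ j)
          = ∑ j ∈ Finset.range (m + m), 2 ^ j :=
        Finset.sum_range_add_sum_Ico _ (by omega)
      rw [sum_two_pow, sum_two_pow] at hsplit
      have p1 : 1 ≤ 2 ^ m := Nat.one_le_two_pow
      have p2 : 2 ^ m ≤ 2 ^ (m + m) := Nat.pow_le_pow_right (by norm_num) (by omega)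
      calc (∑ j ∈ Finset.Ico m (m + m), if b.testBit j then 2 ^ j else 0)
          = ∑ j ∈ Finset.Ico m (m + m), 2 ^ j := Finset.sum_congr rfl hbit
        _ = 2 ^ (m + m) - 2 ^ m := by omega
    have h2 : (∑ j ∈ Finset.Ico m (m + m), if b.testBit j then 2 ^ j else 0)
        ≤ ∑ j ∈ Finset.range (m + m), if b.testBit j then 2 ^ j else 0 := by
      apply Finset.sum_le_sum_of_subset
      intro j hj
      rw [Finset.mem_Ico] at hj
      rw [Finset.mem_range]
      omega
    rw [sum_testBit _ _ hb] at h2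
    omega
  · intro h i hi
    rw [asgOf_one]
    set j := m + m - 1 - (i : ℕ) with hj
    have hij := i.isLt
    have hj1 : m ≤ j := by omega
    have hj2 : j < m + m := by omega
    have hpos : 0 < 2 ^ j := Nat.pow_pos (by norm_num)
    have hmul : 2 ^ (m + m - j) * 2 ^ j = 2 ^ (m + m) := by
      rw [← pow_add]; congr 1; omega
    have h2j : 2 ^ m ≤ 2 ^ j := Nat.pow_le_pow_right (by norm_num) hj1
    have hle : 2 ^ (m + m - j) - 1 ≤ b / 2 ^ j := by
      rw [Nat.le_div_iff_mul_le hpos, Nat.sub_mul, one_mul, hmul]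
      omega
    have hlt : b / 2 ^ j < 2 ^ (m + m - j) := by
      rw [Nat.div_lt_iff_lt_mul hpos, hmul]
      exact hb
    have heq : b / 2 ^ j = 2 ^ (m + m - j) - 1 := by omega
    have hodd : 2 ^ (m + m - j) = 2 * 2 ^ (m + m - j - 1) := by
      rw [← pow_succ']; congr 1; omega
    have hp1 : 0 < 2 ^ (m + m - j - 1) := Nat.pow_pos (by norm_num)
    rw [Nat.testBit_eq_decide_div_mod_eq, heq]
    simp only [decide_eq_true_eq]
    omega

lemma upper_fA (m : ℕ) (hm : 1 ≤ m) : (switches (m + m) 1 (fA (m + m) m)).card ≤ 1 := by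
  have hsub : switches (m + m) 1 (fA (m + m) m) ⊆ {2 ^ (m + m) - 2 ^ m} := by
    intro b hb
    unfold switches at hb
    rw [Finset.mem_filter, Finset.mem_Ico] at hb
    obtain ⟨⟨hb1, hb2⟩, hne⟩ := hb
    have e1 := P_num m hm hb2
    have e2 := P_num m hm (show b - 1 < 2 ^ (m + m) by omega)
    have hiff : ¬((∀ i : Fin (m + m), (i : ℕ) < m → asgOf 1 b i = true) ↔
        (∀ i : Fin (m + m), (i : ℕ) < m → asgOf 1 (b - 1) i = true)) := by
      intro h
      apply hne
      unfold fA
      rw [decide_eq_decide.mpr h]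
    rw [e1, e2] at hiff
    have h2 : 2 ^ m < 2 ^ (m + m) := Nat.pow_lt_pow_right (by norm_num) (by omega)
    rw [Finset.mem_singleton]
    by_cases hc : 2 ^ (m + m) - 2 ^ m ≤ b
    · have hc2 : ¬(2 ^ (m + m) - 2 ^ m ≤ b - 1) := fun hh => hiff ⟨fun _ => hh, fun _ => hc⟩
      omega
    · exfalso
      exact hiff ⟨fun hh => absurd hh hc, fun hh => absurd (by omega) hc⟩
  calc (switches (m + m) 1 (fA (m + m) m)).card ≤ ({2 ^ (m + m) - 2 ^ m} : Finset ℕ).card :=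
        Finset.card_le_card hsub
    _ = 1 := Finset.card_singleton _

lemma g_false_iff (n m : ℕ) (a : Fin n → Bool) :
    (fA n m a && fB n m a) = false ↔
      ((∀ i : Fin n, (i : ℕ) < m → a i = true) ∨ (∀ i : Fin n, m ≤ (i : ℕ) → a i = true)) := by
  rw [Bool.and_eq_false_iff]
  unfold fA fB
  simp only [Bool.not_eq_false', decide_eq_true_eq]

lemma kernelA (m : ℕ) (π : Equiv.Perm (Fin (m + m)))
    (x₀ : Fin (m + m)) (hx₀m : (x₀ : ℕ) < m) (hx₀ : ∀ b, asgOf π b x₀ = b.testBit 0)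
    {b : ℕ} (hb1 : 1 ≤ b)
    (hP : ∀ i : Fin (m + m), (i : ℕ) < m → asgOf π b i = true)
    (hQ : ∀ i : Fin (m + m), m ≤ (i : ℕ) → asgOf π (b - 1) i = true) :
    ∀ j < m + m, b.testBit j = true := by
  obtain ⟨k, h1, h2, h3, h4⟩ := succ_bits (b - 1)
  have hbb : b - 1 + 1 = b := by omega
  rw [hbb] at h1 h3 h4
  have hk0 : k = 0 := by
    by_contra hk
    have hfalse := (h1 0 (by omega)).2
    have htrue := hP x₀ hx₀m
    rw [hx₀ b] at htrue
    rw [htrue] at hfalse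
    exact Bool.noConfusion hfalse
  intro j hj
  rcases Nat.eq_zero_or_pos j with rfl | hjpos
  · rw [← hk0]; exact h3
  · have heq : (b - 1).testBit j = b.testBit j := h4 j (by omega)
    obtain ⟨x, hx⟩ := exists_var π hj
    by_cases hxm : (x : ℕ) < m
    · rw [← hx b]; exact hP x hxm
    · rw [← heq, ← hx (b - 1)]; exact hQ x (by omega)

lemma kernelB (m : ℕ) (π : Equiv.Perm (Fin (m + m)))
    {b : ℕ} (hb2 : b + 1 < 2 ^ (m + m))
    (hP : ∀ i : Fin (m + m), (i : ℕ) < m → asgOf π b i = true)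
    (hQ : ∀ i : Fin (m + m), m ≤ (i : ℕ) → asgOf π (b + 1) i = true) :
    ∃ k < m + m,
      (∀ j < m + m, b.testBit j = decide (j ≠ k)) ∧
      (∀ x : Fin (m + m), (∀ c, asgOf π c x = c.testBit k) → m ≤ (x : ℕ)) ∧
      (∀ j < k, ∀ x : Fin (m + m), (∀ c, asgOf π c x = c.testBit j) → (x : ℕ) < m) := by
  obtain ⟨k, h1, h2, h3, h4⟩ := succ_bits b
  have hk : k < m + m := by
    have hge := Nat.ge_two_pow_of_testBit h3
    by_contra hc
    have : 2 ^ (m + m) ≤ 2 ^ k := Nat.pow_le_pow_right (by norm_num) (by omega)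
    omega
  refine ⟨k, hk, ?_, ?_, ?_⟩
  · intro j hj
    rcases lt_trichotomy j k with h | rfl | h
    · rw [(h1 j h).1]; simp; omega
    · rw [h2]; simp
    · obtain ⟨x, hx⟩ := exists_var π hj
      by_cases hxm : (x : ℕ) < m
      · rw [← hx b, hP x hxm]; simp; omega
      · have ht := hQ x (by omega)
        rw [hx (b + 1)] at ht
        rw [← h4 j h] at ht
        rw [ht]; simp; omega
  · intro x hx
    by_contra hc
    have ht := hP x (by omega)
    rw [hx b, h2] at ht
    exact Bool.noConfusion ht
  · intro j hj x hx
    by_contra hc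
    have ht := hQ x (by omega)
    rw [hx (b + 1), (h1 j hj).2] at ht
    exact Bool.noConfusion ht

def extm (m : ℕ) (c : Fin m → Bool) : Fin (m + m) → Bool :=
  fun i => if h : (i : ℕ) < m then true else c ⟨(i : ℕ) - m, by omega⟩

lemma extm_inj (m : ℕ) : Function.Injective (extm m) := by
  intro c c' h
  funext j
  have hj := j.isLt
  have h1 := congrFun h ⟨m + (j : ℕ), by omega⟩
  unfold extm at h1
  rw [dif_neg (by simp), dif_neg (by simp)] at h1
  have e : (⟨((⟨m + (j : ℕ), by omega⟩ : Fin (m + m)) : ℕ) - m, by omega⟩ : Fin m) = j := by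
    apply Fin.ext
    simp
  rw [e] at h1
  exact h1

lemma lower_aux (m : ℕ) (hm : 1 ≤ m) (π : Equiv.Perm (Fin (m + m)))
    (x₀ : Fin (m + m)) (hx₀m : (x₀ : ℕ) < m) (hx₀ : ∀ b, asgOf π b x₀ = b.testBit 0) :
    2 ^ (m + 1) - 3 ≤
      (switches (m + m) π (fun a => fA (m + m) m a && fB (m + m) m a)).card := by
  classical
  have h2m : 2 ≤ 2 ^ m := by
    calc 2 = 2 ^ 1 := (pow_one 2).symm
      _ ≤ 2 ^ m := Nat.pow_le_pow_right (by norm_num) hm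
  -- the set of "A-type zeros"
  set A : Finset ℕ := (Finset.range (2 ^ (m + m))).filter
      (fun b => ∀ i : Fin (m + m), (i : ℕ) < m → asgOf π b i = true) with hA
  have hAmem : ∀ b ∈ A, b < 2 ^ (m + m) ∧
      ∀ i : Fin (m + m), (i : ℕ) < m → asgOf π b i = true := by
    intro b hb
    rw [hA, Finset.mem_filter, Finset.mem_range] at hb
    exact hb
  have hAzero : ∀ b ∈ A, (fA (m + m) m (asgOf π b) && fB (m + m) m (asgOf π b)) = false :=
    fun b hb => (g_false_iff (m + m) m (asgOf π b)).mpr (Or.inl (hAmem b hb).2)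
  -- A has at least 2^m elements
  have hcardA : 2 ^ m ≤ A.card := by
    have hinj : ∀ c ∈ (Finset.univ : Finset (Fin m → Bool)), ∀ c' ∈ Finset.univ,
        numOf π (extm m c) = numOf π (extm m c') → c = c' := by
      intro c _ c' _ hcc
      have h := congrArg (asgOf π) hcc
      rw [asgOf_numOf, asgOf_numOf] at h
      exact extm_inj m h
    have hmaps : ∀ c ∈ (Finset.univ : Finset (Fin m → Bool)), numOf π (extm m c) ∈ A := by
      intro c _
      rw [hA, Finset.mem_filter, Finset.mem_range]
      refine ⟨numOf_lt π _, fun i hi => ?_⟩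
      rw [asgOf_numOf]
      unfold extm
      rw [dif_pos hi]
    have := Finset.card_le_card_of_injOn _ hmaps (fun c hc c' hc' => hinj c hc c' hc')
    rw [Finset.card_univ] at this
    simpa [Fintype.card_fun] using this
  -- left-boundary switches
  set AL : Finset ℕ := A.filter
      (fun b => 1 ≤ b ∧
        (fA (m + m) m (asgOf π (b - 1)) && fB (m + m) m (asgOf π (b - 1))) = true) with hAL
  set AR0 : Finset ℕ := A.filter
      (fun b => b + 1 < 2 ^ (m + m) ∧
        (fA (m + m) m (asgOf π (b + 1)) && fB (m + m) m (asgOf π (b + 1))) = true) with hAR0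
  set AR : Finset ℕ := AR0.image (· + 1) with hAR
  -- b = 0 is never in A
  have hA0 : ∀ b ∈ A, 1 ≤ b := by
    intro b hb
    by_contra hc
    have hb0 : b = 0 := by omega
    have := (hAmem b hb).2 x₀ hx₀m
    rw [hx₀ b, hb0] at this
    simp at this
  -- no two elements of A with a zero left-neighbour
  have hL1 : (A.filter (fun b => ¬(1 ≤ b ∧
      (fA (m + m) m (asgOf π (b - 1)) && fB (m + m) m (asgOf π (b - 1))) = true))).card ≤ 1 := by
    rw [Finset.card_le_one]
    have key : ∀ b ∈ A.filter (fun b => ¬(1 ≤ b ∧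
        (fA (m + m) m (asgOf π (b - 1)) && fB (m + m) m (asgOf π (b - 1))) = true)),
        b < 2 ^ (m + m) ∧ ∀ j < m + m, b.testBit j = true := by
      intro b hb
      rw [Finset.mem_filter] at hb
      obtain ⟨hbA, hbc⟩ := hb
      have hb1 : 1 ≤ b := hA0 b hbA
      have hzero : (fA (m + m) m (asgOf π (b - 1)) && fB (m + m) m (asgOf π (b - 1))) = false := by
        rcases Bool.eq_false_or_eq_true
          (fA (m + m) m (asgOf π (b - 1)) && fB (m + m) m (asgOf π (b - 1))) with h | h
        · exact absurd ⟨hb1, h⟩ hbc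
        · exact h
      have hPQ := (g_false_iff (m + m) m (asgOf π (b - 1))).mp hzero
      have hP := (hAmem b hbA).2
      rcases hPQ with hP' | hQ'
      · exfalso
        have e1 := hP x₀ hx₀m
        have e2 := hP' x₀ hx₀m
        rw [hx₀ b] at e1
        rw [hx₀ (b - 1)] at e2
        have := bit0_ne (b - 1)
        rw [show b - 1 + 1 = b by omega] at this
        rw [e1, e2] at this
        exact this rfl
      · exact ⟨(hAmem b hbA).1, kernelA m π x₀ hx₀m hx₀ hb1 hP hQ'⟩
    intro a ha b hb
    obtain ⟨ha2, ha1⟩ := key a ha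
    obtain ⟨hb2, hb1⟩ := key b hb
    apply Nat.eq_of_testBit_eq
    intro j
    by_cases hj : j < m + m
    · rw [ha1 j hj, hb1 j hj]
    · have hle : 2 ^ (m + m) ≤ 2 ^ j := Nat.pow_le_pow_right (by norm_num) (by omega)
      rw [Nat.testBit_lt_two_pow (by omega), Nat.testBit_lt_two_pow (by omega)]
  have hALcard : 2 ^ m - 1 ≤ AL.card := by
    have := Finset.card_filter_add_card_filter_not (s := A)
      (p := fun b => 1 ≤ b ∧
        (fA (m + m) m (asgOf π (b - 1)) && fB (m + m) m (asgOf π (b - 1))) = true)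
    rw [← hAL] at this
    omega
  -- right-boundary switches
  have hR1 : (A.filter (fun b => ¬(b + 1 < 2 ^ (m + m) ∧
      (fA (m + m) m (asgOf π (b + 1)) && fB (m + m) m (asgOf π (b + 1))) = true))).card ≤ 2 := by
    have hsub : A.filter (fun b => ¬(b + 1 < 2 ^ (m + m) ∧
        (fA (m + m) m (asgOf π (b + 1)) && fB (m + m) m (asgOf π (b + 1))) = true)) ⊆
        A.filter (fun b => 2 ^ (m + m) ≤ b + 1) ∪
        A.filter (fun b => b + 1 < 2 ^ (m + m) ∧
          (fA (m + m) m (asgOf π (b + 1)) && fB (m + m) m (asgOf π (b + 1))) = false) := by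
      intro b hb
      rw [Finset.mem_filter] at hb
      obtain ⟨hbA, hbc⟩ := hb
      by_cases h1 : b + 1 < 2 ^ (m + m)
      · refine Finset.mem_union_right _ (Finset.mem_filter.mpr ⟨hbA, h1, ?_⟩)
        rcases Bool.eq_false_or_eq_true
          (fA (m + m) m (asgOf π (b + 1)) && fB (m + m) m (asgOf π (b + 1))) with h | h
        · exact absurd ⟨h1, h⟩ hbc
        · exact h
      · exact Finset.mem_union_left _ (Finset.mem_filter.mpr ⟨hbA, by omega⟩)
    have c1 : (A.filter (fun b => 2 ^ (m + m) ≤ b + 1)).card ≤ 1 := by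
      rw [Finset.card_le_one]
      intro a ha b hb
      rw [Finset.mem_filter] at ha hb
      have := (hAmem a ha.1).1
      have := (hAmem b hb.1).1
      omega
    have c2 : (A.filter (fun b => b + 1 < 2 ^ (m + m) ∧
        (fA (m + m) m (asgOf π (b + 1)) && fB (m + m) m (asgOf π (b + 1))) = false)).card ≤ 1 := by
      rw [Finset.card_le_one]
      have key : ∀ b ∈ A.filter (fun b => b + 1 < 2 ^ (m + m) ∧
          (fA (m + m) m (asgOf π (b + 1)) && fB (m + m) m (asgOf π (b + 1))) = false),
          b < 2 ^ (m + m) ∧ ∃ k < m + m,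
            (∀ j < m + m, b.testBit j = decide (j ≠ k)) ∧
            (∀ x : Fin (m + m), (∀ c, asgOf π c x = c.testBit k) → m ≤ (x : ℕ)) ∧
            (∀ j < k, ∀ x : Fin (m + m), (∀ c, asgOf π c x = c.testBit j) → (x : ℕ) < m) := by
        intro b hb
        rw [Finset.mem_filter] at hb
        obtain ⟨hbA, hb1, hbz⟩ := hb
        have hP := (hAmem b hbA).2
        have hPQ := (g_false_iff (m + m) m (asgOf π (b + 1))).mp hbz
        rcases hPQ with hP' | hQ'
        · exfalso
          have e1 := hP x₀ hx₀m
          have e2 := hP' x₀ hx₀m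
          rw [hx₀ b] at e1
          rw [hx₀ (b + 1)] at e2
          have := bit0_ne b
          rw [e1, e2] at this
          exact this rfl
        · exact ⟨(hAmem b hbA).1, kernelB m π hb1 hP hQ'⟩
      intro a ha b hb
      obtain ⟨ha2, k, hk, ha3, ha4, ha5⟩ := key a ha
      obtain ⟨hb2, k', hk', hb3, hb4, hb5⟩ := key b hb
      have hkk : k = k' := by
        rcases lt_trichotomy k k' with h | h | h
        · exfalso
          obtain ⟨x, hx⟩ := exists_var π hk
          exact absurd (hb5 k h x hx) (by have := ha4 x hx; omega)
        · exact h
        · exfalso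
          obtain ⟨x, hx⟩ := exists_var π hk'
          exact absurd (ha5 k' h x hx) (by have := hb4 x hx; omega)
      apply Nat.eq_of_testBit_eq
      intro j
      by_cases hj : j < m + m
      · rw [ha3 j hj, hb3 j hj, hkk]
      · have hle : 2 ^ (m + m) ≤ 2 ^ j := Nat.pow_le_pow_right (by norm_num) (by omega)
        rw [Nat.testBit_lt_two_pow (by omega), Nat.testBit_lt_two_pow (by omega)]
    calc (A.filter _).card ≤ _ := Finset.card_le_card hsub
      _ ≤ _ := Finset.card_union_le _ _
      _ ≤ 2 := by omega
  have hAR0card : 2 ^ m - 2 ≤ AR0.card := by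
    have := Finset.card_filter_add_card_filter_not (s := A)
      (p := fun b => b + 1 < 2 ^ (m + m) ∧
        (fA (m + m) m (asgOf π (b + 1)) && fB (m + m) m (asgOf π (b + 1))) = true)
    rw [← hAR0] at this
    omega
  have hARcard : 2 ^ m - 2 ≤ AR.card := by
    rw [hAR, Finset.card_image_of_injective _ (add_left_injective 1)]
    exact hAR0card
  -- both sets consist of switches
  have hALsub : AL ⊆ switches (m + m) π (fun a => fA (m + m) m a && fB (m + m) m a) := by
    intro b hb
    rw [hAL, Finset.mem_filter] at hb
    obtain ⟨hbA, hb1, hbt⟩ := hb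
    unfold switches
    rw [Finset.mem_filter, Finset.mem_Ico]
    refine ⟨⟨hb1, (hAmem b hbA).1⟩, ?_⟩
    show (fA (m + m) m (asgOf π b) && fB (m + m) m (asgOf π b)) ≠
      (fA (m + m) m (asgOf π (b - 1)) && fB (m + m) m (asgOf π (b - 1)))
    rw [hAzero b hbA, hbt]
    simp
  have hARsub : AR ⊆ switches (m + m) π (fun a => fA (m + m) m a && fB (m + m) m a) := by
    intro c hc
    rw [hAR, Finset.mem_image] at hc
    obtain ⟨b, hb, rfl⟩ := hc
    rw [hAR0, Finset.mem_filter] at hb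
    obtain ⟨hbA, hb1, hbt⟩ := hb
    unfold switches
    rw [Finset.mem_filter, Finset.mem_Ico]
    refine ⟨⟨by omega, hb1⟩, ?_⟩
    show (fA (m + m) m (asgOf π (b + 1)) && fB (m + m) m (asgOf π (b + 1))) ≠
      (fA (m + m) m (asgOf π (b + 1 - 1)) && fB (m + m) m (asgOf π (b + 1 - 1)))
    rw [show b + 1 - 1 = b by omega, hbt, hAzero b hbA]
    simp
  have hdisj : Disjoint AL AR := by
    rw [Finset.disjoint_left]
    intro c hcl hcr
    rw [hAL, Finset.mem_filter] at hcl
    rw [hAR, Finset.mem_image] at hcr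
    obtain ⟨b, hb, rfl⟩ := hcr
    rw [hAR0, Finset.mem_filter] at hb
    have h1 := hAzero _ hcl.1
    have h2 := hb.2.2
    rw [h1] at h2
    exact Bool.noConfusion h2
  have hpow : 2 ^ (m + 1) = 2 ^ m * 2 := pow_succ 2 m
  calc 2 ^ (m + 1) - 3 ≤ AL.card + AR.card := by omega
    _ = (AL ∪ AR).card := (Finset.card_union_of_disjoint hdisj).symm
    _ ≤ (switches (m + m) π (fun a => fA (m + m) m a && fB (m + m) m a)).card :=
        Finset.card_le_card (Finset.union_subset hALsub hARsub)

lemma g_symm (m : ℕ) (hm : 1 ≤ m) (a : Fin (m + m) → Bool) :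
    (fA (m + m) m (fun x => a (σm m hm x)) && fB (m + m) m (fun x => a (σm m hm x))) =
      (fA (m + m) m a && fB (m + m) m a) := by
  rw [← fB_comp m hm a, ← fA_comp m hm a, Bool.and_comm]

lemma lower_main (m : ℕ) (hm : 1 ≤ m) (π : Equiv.Perm (Fin (m + m))) :
    2 ^ (m + 1) - 3 ≤
      (switches (m + m) π (fun a => fA (m + m) m a && fB (m + m) m a)).card := by
  obtain ⟨x₀, hx₀⟩ := exists_var π (show 0 < m + m by omega)
  by_cases hx₀m : (x₀ : ℕ) < m
  · exact lower_aux m hm π x₀ hx₀m hx₀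
  · have hswitch : switches (m + m) π (fun a => fA (m + m) m a && fB (m + m) m a) =
        switches (m + m) (π.trans (σm m hm).symm)
          (fun a => fA (m + m) m a && fB (m + m) m a) := by
      apply switches_congr
      intro b
      rw [asgOf_comp π (σm m hm) b]
      exact (g_symm m hm (asgOf π b)).symm
    rw [hswitch]
    have hx₀' : ∀ b, asgOf (π.trans (σm m hm).symm) b ((σm m hm).symm x₀) = b.testBit 0 := by
      intro b
      rw [asgOf_comp π (σm m hm) b]
      show asgOf π b ((σm m hm) ((σm m hm).symm x₀)) = b.testBit 0
      rw [Equiv.apply_symm_apply]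
      exact hx₀ b
    have hx₀m' : (((σm m hm).symm x₀ : Fin (m + m)) : ℕ) < m := by
      apply (σm_lt m hm ((σm m hm).symm x₀)).mpr
      rw [Equiv.apply_symm_apply]
      omega
    exact lower_aux m hm (π.trans (σm m hm).symm) _ hx₀m' hx₀'

lemma upper_fB (m : ℕ) (hm : 1 ≤ m) :
    (switches (m + m) (σm m hm) (fB (m + m) m)).card ≤ 1 := by
  have hswitch : switches (m + m) (σm m hm) (fB (m + m) m) =
      switches (m + m) 1 (fA (m + m) m) := by
    have h1 : (σm m hm).trans (σm m hm).symm = (1 : Equiv.Perm (Fin (m + m))) :=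
      Equiv.self_trans_symm _
    apply switches_congr
    intro b
    rw [fB_comp m hm (asgOf (σm m hm) b)]
    congr 1
    have := asgOf_comp (σm m hm) (σm m hm) b
    rw [h1] at this
    exact this.symm
  rw [hswitch]
  exact upper_fA m hm

/-- For every even `n` there are functions with switch-lists of size at most
`2n` whose conjunction needs switch-lists of size at least `n·(2^(n/2+1)-3)`
under every variable order. -/
theorem conjunction_blowup {n : ℕ} (hn : Even n) :
    ∃ h₁ h₂ : (Fin n → Bool) → Bool,
      (∃ π : Equiv.Perm (Fin n), n * (switches n π h₁).card ≤ 2 * n) ∧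
      (∃ π : Equiv.Perm (Fin n), n * (switches n π h₂).card ≤ 2 * n) ∧
      (∀ π : Equiv.Perm (Fin n),
        n * (2 ^ (n / 2 + 1) - 3) ≤
          n * (switches n π (fun a => h₁ a && h₂ a)).card) := by
  obtain ⟨m, rfl⟩ := hn
  rcases Nat.eq_zero_or_pos m with rfl | hm
  · exact ⟨fun _ => true, fun _ => true, ⟨1, by simp⟩, ⟨1, by simp⟩, fun π => by simp⟩
  · refine ⟨fA (m + m) m, fB (m + m) m, ⟨1, ?_⟩, ⟨σm m hm, ?_⟩, fun π => ?_⟩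
    · have := upper_fA m hm
      calc (m + m) * (switches (m + m) 1 (fA (m + m) m)).card ≤ (m + m) * 1 :=
            Nat.mul_le_mul_left _ this
        _ ≤ 2 * (m + m) := by omega
    · have := upper_fB m hm
      calc (m + m) * (switches (m + m) (σm m hm) (fB (m + m) m)).card ≤ (m + m) * 1 :=
            Nat.mul_le_mul_left _ this
        _ ≤ 2 * (m + m) := by omega
    · have hd : (m + m) / 2 = m := by omega
      rw [hd]
      exact Nat.mul_le_mul_left _ (lower_main m hm π)
end

section
/- Let n be even and g(x_1,...,x_n) = (⋀_{i=1}^{n/2} x_i) ∨ (⋀_{i=n/2+1}^{n} x_i). For every variable order π, the function g has at least 2^{n/2+1} − 3 switches with respect to π. -/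
open Finset


/-- `g = (⋀_{j=1}^{n/2} xⱼ) ∨ (⋀_{j=n/2+1}^{n} xⱼ)`. -/
def g (n : ℕ) : (Fin n → Bool) → Bool := fun a =>
  (decide (∀ i : Fin n, (i : ℕ) < n / 2 → a i = true)) ||
  (decide (∀ i : Fin n, n / 2 ≤ (i : ℕ) → a i = true))


def enc (F : Finset ℕ) : ℕ := ∑ k ∈ F, 2 ^ k

lemma enc_range (n : ℕ) : enc (range n) = 2 ^ n - 1 := by
  induction n with
  | zero => simp [enc]
  | succ n ih =>
    have h1 : (1:ℕ) ≤ 2 ^ n := Nat.one_le_two_pow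
    rw [enc, Finset.range_add_one, Finset.sum_insert (by simp), ← enc, ih, pow_succ]
    omega

lemma enc_le_of_subset {F G : Finset ℕ} (h : F ⊆ G) : enc F ≤ enc G :=
  Finset.sum_le_sum_of_subset h

lemma enc_lt_of_ssubset {F G : Finset ℕ} (h : F ⊂ G) : enc F < enc G := by
  obtain ⟨w, hwG, hwF⟩ := Finset.exists_of_ssubset h
  calc enc F < enc F + 2 ^ w := Nat.lt_add_of_pos_right (Nat.two_pow_pos w)
    _ ≤ enc G := by
        have h0 := Finset.add_sum_erase G (fun k => 2 ^ k) hwG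
        beta_reduce at h0
        have h2 : F ⊆ G.erase w := fun x hx => Finset.mem_erase.mpr ⟨by rintro rfl; exact hwF hx, h.1 hx⟩
        have h3 : enc F ≤ enc (G.erase w) := enc_le_of_subset h2
        unfold enc at *
        omega

lemma testBit_enc (F : Finset ℕ) (j : ℕ) : (enc F).testBit j = decide (j ∈ F) := by
  induction F using Finset.induction_on_max with
  | empty => simp [enc]
  | insert a F ha ih =>
    have haF : a ∉ F := fun h => lt_irrefl a (ha a h)
    have hF : enc F < 2 ^ a := by
      have : F ⊆ range a := fun x hx => Finset.mem_range.mpr (ha x hx)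
      have := enc_le_of_subset this
      have h1 : (1:ℕ) ≤ 2 ^ a := Nat.one_le_two_pow
      rw [enc_range] at this
      omega
    rw [enc, Finset.sum_insert haF, ← enc]
    rcases lt_trichotomy j a with h | h | h
    · rw [Nat.testBit_two_pow_add_gt h, ih]
      have hne : j ≠ a := by omega
      simp [Finset.mem_insert, hne]
    · subst h
      rw [Nat.testBit_two_pow_add_eq, Nat.testBit_lt_two_pow hF]
      simp
    · have hlt : 2 ^ a + enc F < 2 ^ j := by
        calc 2 ^ a + enc F < 2 ^ a + 2 ^ a := by omega
          _ = 2 ^ (a+1) := by ring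
          _ ≤ 2 ^ j := Nat.pow_le_pow_right (by norm_num) h
      rw [Nat.testBit_lt_two_pow hlt]
      have : j ∉ insert a F := by
        simp only [Finset.mem_insert]
        rintro (rfl | hj)
        · exact lt_irrefl j h
        · exact absurd (ha j hj) (by omega)
      simp [this]

lemma enc_injective : Function.Injective enc := by
  intro F G h
  ext k
  have := congrArg (fun x => Nat.testBit x k) h
  simp only [testBit_enc] at this
  simpa using this

lemma enc_pos {F : Finset ℕ} (h : 0 ∈ F) : 1 ≤ enc F := by
  have : (2:ℕ) ^ 0 ≤ enc F := Finset.single_le_sum (fun i _ => Nat.zero_le _) h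
  simpa using this

lemma enc_odd {F : Finset ℕ} (h : 0 ∈ F) : enc F % 2 = 1 := by
  have := testBit_enc F 0
  rw [Nat.testBit_zero] at this
  simp [h] at this
  exact this

lemma enc_succ {F : Finset ℕ} {k₀ : ℕ} (h1 : k₀ ∉ F) (h2 : range k₀ ⊆ F) :
    enc F + 1 = enc (insert k₀ (F \ range (k₀ + 1))) := by
  have hsd : F \ range k₀ = F \ range (k₀ + 1) := by
    ext x
    simp only [Finset.mem_sdiff, Finset.mem_range]
    constructor
    · rintro ⟨hx, hx2⟩
      refine ⟨hx, fun hlt => ?_⟩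
      have : x ≠ k₀ := fun e => h1 (e ▸ hx)
      omega
    · rintro ⟨hx, hx2⟩; exact ⟨hx, by omega⟩
  have hk₀' : k₀ ∉ F \ range (k₀ + 1) := by simp
  have hsplit := Finset.sum_sdiff h2 (f := fun k => (2:ℕ) ^ k)
  beta_reduce at hsplit
  have hr : enc (range k₀) = 2 ^ k₀ - 1 := enc_range k₀
  have h1' : (1:ℕ) ≤ 2 ^ k₀ := Nat.one_le_two_pow
  unfold enc at *
  rw [Finset.sum_insert hk₀', ← hsd]
  omega

lemma enc_pred {F : Finset ℕ} (h : 0 ∈ F) : enc F - 1 = enc (F.erase 0) := by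
  have h0 := Finset.add_sum_erase F (fun k => 2 ^ k) h
  beta_reduce at h0
  unfold enc
  omega

lemma core {n m : ℕ} (hm : 1 ≤ m) (PP QQ : Finset ℕ) (F : ℕ → Bool)
    (hPQ : Disjoint PP QQ) (hU : PP ∪ QQ = Finset.range n)
    (hP : PP.card = m) (h0 : 0 ∈ QQ)
    (hF : ∀ b, F b = ((decide (∀ k ∈ PP, Nat.testBit b k = true)) ||
      (decide (∀ k ∈ QQ, Nat.testBit b k = true)))) :
    2 ^ (m + 1) - 3 ≤ ((Finset.Ico 1 (2 ^ n)).filter fun b => F b ≠ F (b - 1)).card := by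
  classical
  have hPne : PP.Nonempty := Finset.card_pos.mp (by omega)
  set ℓ := PP.min' hPne with hℓdef
  have hℓP : ℓ ∈ PP := Finset.min'_mem _ _
  have hPsub : PP ⊆ range n := hU ▸ Finset.subset_union_left
  have hQsub : QQ ⊆ range n := hU ▸ Finset.subset_union_right
  -- basic facts about Fs := QQ ∪ S for S ⊊ PP
  have key : ∀ S : Finset ℕ, S ⊆ PP → S ≠ PP →
      (0 ∈ QQ ∪ S) ∧ (QQ ∪ S ⊂ range n) ∧ (∃ w ∈ PP, w ∉ QQ ∪ S) := by
    intro S hS hSne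
    obtain ⟨w, hwP, hwS⟩ := Finset.exists_of_ssubset (hS.ssubset_of_ne hSne)
    have hwQ : w ∉ QQ := fun hw => (Finset.disjoint_left.mp hPQ hwP) hw
    have hwF : w ∉ QQ ∪ S := by simp [Finset.mem_union, hwQ, hwS]
    refine ⟨Finset.mem_union_left _ h0, ?_, ⟨w, hwP, hwF⟩⟩
    refine Finset.ssubset_iff_of_subset ?_ |>.mpr ⟨w, hU ▸ Finset.mem_union_left _ hwP, hwF⟩
    intro x hx
    rcases Finset.mem_union.mp hx with hx | hx
    · exact hQsub hx
    · exact hPsub (hS hx)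
  -- value at enc (QQ ∪ S) is true
  have valT : ∀ S : Finset ℕ, F (enc (QQ ∪ S)) = true := by
    intro S
    rw [hF]
    refine Bool.or_eq_true _ _ |>.mpr (Or.inr ?_)
    simp only [decide_eq_true_eq]
    intro k hk
    rw [testBit_enc]
    simp [Finset.mem_union, hk]
  -- claim A : enc (QQ ∪ S) is a switch point
  have claimA : ∀ S : Finset ℕ, S ⊆ PP → S ≠ PP →
      enc (QQ ∪ S) ∈ (Finset.Ico 1 (2 ^ n)).filter fun b => F b ≠ F (b - 1) := by
    intro S hS hSne
    obtain ⟨h0F, hss, w, hwP, hwF⟩ := key S hS hSne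
    refine Finset.mem_filter.mpr ⟨Finset.mem_Ico.mpr ⟨enc_pos h0F, ?_⟩, ?_⟩
    · calc enc (QQ ∪ S) < enc (range n) := enc_lt_of_ssubset hss
        _ ≤ 2 ^ n := by
            rw [enc_range]
            have h1 : (1:ℕ) ≤ 2 ^ n := Nat.one_le_two_pow
            omega
    · rw [valT S, enc_pred h0F, hF]
      have hPfalse : ¬ (∀ k ∈ PP, Nat.testBit (enc ((QQ ∪ S).erase 0)) k = true) := by
        intro hall
        have := hall w hwP
        rw [testBit_enc] at this
        simp only [decide_eq_true_eq, Finset.mem_erase] at this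
        exact hwF this.2
      have hQfalse : ¬ (∀ k ∈ QQ, Nat.testBit (enc ((QQ ∪ S).erase 0)) k = true) := by
        intro hall
        have := hall 0 h0
        rw [testBit_enc] at this
        simp at this
      simp [hPfalse, hQfalse]
  -- claim B : enc (QQ ∪ S) + 1 is a switch point when S ≠ PP.erase ℓ as well
  have claimB : ∀ S : Finset ℕ, S ⊆ PP → S ≠ PP → S ≠ PP.erase ℓ →
      enc (QQ ∪ S) + 1 ∈ (Finset.Ico 1 (2 ^ n)).filter fun b => F b ≠ F (b - 1) := by
    intro S hS hSne hSne'
    obtain ⟨h0F, hss, w, hwP, hwF⟩ := key S hS hSne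
    have hPSne : (PP \ S).Nonempty := ⟨w, Finset.mem_sdiff.mpr ⟨hwP, fun h => hwF (Finset.mem_union_right _ h)⟩⟩
    set k₀ := (PP \ S).min' hPSne with hk₀def
    have hk₀ : k₀ ∈ PP \ S := Finset.min'_mem _ _
    have hk₀P : k₀ ∈ PP := (Finset.mem_sdiff.mp hk₀).1
    have hk₀S : k₀ ∉ S := (Finset.mem_sdiff.mp hk₀).2
    have hk₀F : k₀ ∉ QQ ∪ S := by
      simp only [Finset.mem_union]
      rintro (h | h)
      · exact (Finset.disjoint_left.mp hPQ hk₀P) h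
      · exact hk₀S h
    have hlow : range k₀ ⊆ QQ ∪ S := by
      intro k hk
      have hkn : k ∈ range n := by
        have := hPsub hk₀P
        simp only [Finset.mem_range] at *
        omega
      rw [← hU] at hkn
      rcases Finset.mem_union.mp hkn with hkP | hkQ
      · refine Finset.mem_union_right _ ?_
        by_contra hkS
        have : k₀ ≤ k := Finset.min'_le _ _ (Finset.mem_sdiff.mpr ⟨hkP, hkS⟩)
        simp only [Finset.mem_range] at hk
        omega
      · exact Finset.mem_union_left _ hkQ
    have heq := enc_succ hk₀F hlow
    have hk₀0 : k₀ ≠ 0 := by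
      intro e
      exact (Finset.disjoint_left.mp hPQ (e ▸ hk₀P)) h0
    refine Finset.mem_filter.mpr ⟨Finset.mem_Ico.mpr ⟨by omega, ?_⟩, ?_⟩
    · have : enc (QQ ∪ S) < enc (range n) := enc_lt_of_ssubset hss
      rw [enc_range] at this
      have : (1:ℕ) ≤ 2 ^ n := Nat.one_le_two_pow
      omega
    · rw [Nat.add_sub_cancel, valT S, heq, hF]
      set G := insert k₀ ((QQ ∪ S) \ range (k₀ + 1)) with hGdef
      have hQfalse : ¬ (∀ k ∈ QQ, Nat.testBit (enc G) k = true) := by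
        intro hall
        have := hall 0 h0
        rw [testBit_enc] at this
        simp only [decide_eq_true_eq, hGdef, Finset.mem_insert, Finset.mem_sdiff,
          Finset.mem_range] at this
        rcases this with h | ⟨_, h⟩
        · exact hk₀0 h.symm
        · omega
      have hPfalse : ¬ (∀ k ∈ PP, Nat.testBit (enc G) k = true) := by
        intro hall
        -- find k₁ ∈ PP with k₁ ∉ G
        have hex : ∃ k₁ ∈ PP, k₁ ∉ G := by
          by_cases hcase : PP \ S ⊆ {k₀}
          · -- then S = PP.erase k₀ and k₀ ≠ ℓ, take k₁ = ℓ
            have hSeq : S = PP.erase k₀ := by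
              ext x
              simp only [Finset.mem_erase]
              constructor
              · intro hx
                exact ⟨fun e => hk₀S (e ▸ hx), hS hx⟩
              · rintro ⟨hx1, hx2⟩
                by_contra hxS
                have : x ∈ PP \ S := Finset.mem_sdiff.mpr ⟨hx2, hxS⟩
                have := hcase this
                simp only [Finset.mem_singleton] at this
                exact hx1 this
            have hk₀ℓ : k₀ ≠ ℓ := fun e => hSne' (hSeq.trans (by rw [e]))
            have hℓle : ℓ ≤ k₀ := Finset.min'_le _ _ hk₀P
            refine ⟨ℓ, hℓP, ?_⟩
            simp only [hGdef, Finset.mem_insert, Finset.mem_sdiff, Finset.mem_range]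
            push_neg
            exact ⟨Ne.symm hk₀ℓ, fun _ => by omega⟩
          · obtain ⟨k₁, hk₁PS, hk₁ne⟩ := Finset.not_subset.mp hcase
            simp only [Finset.mem_singleton] at hk₁ne
            obtain ⟨hk₁P, hk₁S⟩ := Finset.mem_sdiff.mp hk₁PS
            refine ⟨k₁, hk₁P, ?_⟩
            simp only [hGdef, Finset.mem_insert, Finset.mem_sdiff, Finset.mem_range]
            push_neg
            refine ⟨hk₁ne, fun hk₁F => ?_⟩
            exfalso
            rcases Finset.mem_union.mp hk₁F with h | h
            · exact (Finset.disjoint_left.mp hPQ hk₁P) h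
            · exact hk₁S h
        obtain ⟨k₁, hk₁P, hk₁G⟩ := hex
        have := hall k₁ hk₁P
        rw [testBit_enc] at this
        simp only [decide_eq_true_eq] at this
        exact hk₁G this
      simp [hPfalse, hQfalse]
  -- now count
  have hinj : ∀ S₁ ∈ PP.powerset, ∀ S₂ ∈ PP.powerset,
      enc (QQ ∪ S₁) = enc (QQ ∪ S₂) → S₁ = S₂ := by
    intro S₁ h₁ S₂ h₂ h
    have := enc_injective h
    ext x
    constructor
    · intro hx
      have hx1 : x ∈ QQ ∪ S₂ := this ▸ Finset.mem_union_right _ hx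
      rcases Finset.mem_union.mp hx1 with h' | h'
      · exact absurd h' (Finset.disjoint_left.mp hPQ ((Finset.mem_powerset.mp h₁) hx))
      · exact h'
    · intro hx
      have hx1 : x ∈ QQ ∪ S₁ := this ▸ Finset.mem_union_right _ hx
      rcases Finset.mem_union.mp hx1 with h' | h'
      · exact absurd h' (Finset.disjoint_left.mp hPQ ((Finset.mem_powerset.mp h₂) hx))
      · exact h'
  set D₁ := PP.powerset.erase PP with hD₁
  set D₂ := D₁.erase (PP.erase ℓ) with hD₂
  set T₁ := D₁.image (fun S => enc (QQ ∪ S)) with hT₁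
  set T₂ := D₂.image (fun S => enc (QQ ∪ S) + 1) with hT₂
  have hD₁card : D₁.card = 2 ^ m - 1 := by
    rw [hD₁, Finset.card_erase_of_mem (Finset.mem_powerset.mpr Finset.Subset.rfl),
      Finset.card_powerset, hP]
  have hmemD₂ : PP.erase ℓ ∈ D₁ := by
    rw [hD₁]
    refine Finset.mem_erase.mpr ⟨?_, Finset.mem_powerset.mpr (Finset.erase_subset _ _)⟩
    intro h
    have : ℓ ∉ PP.erase ℓ := Finset.notMem_erase _ _
    rw [h] at this
    exact this hℓP
  have hD₂card : D₂.card = 2 ^ m - 2 := by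
    rw [hD₂, Finset.card_erase_of_mem hmemD₂, hD₁card]
    omega
  have hT₁card : T₁.card = 2 ^ m - 1 := by
    rw [hT₁, Finset.card_image_of_injOn, hD₁card]
    intro S₁ h₁ S₂ h₂ h
    exact hinj S₁ (Finset.mem_of_mem_erase h₁) S₂ (Finset.mem_of_mem_erase h₂) h
  have hT₂card : T₂.card = 2 ^ m - 2 := by
    rw [hT₂, Finset.card_image_of_injOn, hD₂card]
    intro S₁ h₁ S₂ h₂ h
    beta_reduce at h
    exact hinj S₁ (Finset.mem_of_mem_erase (Finset.mem_of_mem_erase h₁))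
      S₂ (Finset.mem_of_mem_erase (Finset.mem_of_mem_erase h₂)) (by omega)
  have hdisj : Disjoint T₁ T₂ := by
    rw [Finset.disjoint_left]
    intro a ha₁ ha₂
    simp only [hT₁, Finset.mem_image] at ha₁
    simp only [hT₂, Finset.mem_image] at ha₂
    obtain ⟨S₁, _, rfl⟩ := ha₁
    obtain ⟨S₂, _, hS₂⟩ := ha₂
    have o₁ : enc (QQ ∪ S₁) % 2 = 1 := enc_odd (Finset.mem_union_left _ h0)
    have o₂ : enc (QQ ∪ S₂) % 2 = 1 := enc_odd (Finset.mem_union_left _ h0)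
    omega
  have hsub : T₁ ∪ T₂ ⊆ (Finset.Ico 1 (2 ^ n)).filter fun b => F b ≠ F (b - 1) := by
    intro a ha
    rcases Finset.mem_union.mp ha with ha | ha
    · rw [hT₁, Finset.mem_image] at ha
      obtain ⟨S, hS, rfl⟩ := ha
      rw [hD₁, Finset.mem_erase, Finset.mem_powerset] at hS
      exact claimA S hS.2 hS.1
    · rw [hT₂, Finset.mem_image] at ha
      obtain ⟨S, hS, rfl⟩ := ha
      rw [hD₂, Finset.mem_erase, hD₁, Finset.mem_erase, Finset.mem_powerset] at hS
      exact claimB S hS.2.2 hS.2.1 hS.1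
  calc 2 ^ (m + 1) - 3 = (2 ^ m - 1) + (2 ^ m - 2) := by
        have : (2:ℕ) ≤ 2 ^ m := by
          calc (2:ℕ) = 2 ^ 1 := rfl
            _ ≤ 2 ^ m := Nat.pow_le_pow_right (by norm_num) hm
        rw [pow_succ]
        omega
    _ = T₁.card + T₂.card := by rw [hT₁card, hT₂card]
    _ = (T₁ ∪ T₂).card := (Finset.card_union_of_disjoint hdisj).symm
    _ ≤ _ := Finset.card_le_card hsub


/-- For every variable order `π`, the function
`g = (⋀_{j≤n/2} xⱼ) ∨ (⋀_{j>n/2} xⱼ)` has at least `2^(n/2+1) - 3` switches. -/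
theorem g_many_switches {n : ℕ} (hn : Even n) (π : Equiv.Perm (Fin n)) :
    2 ^ (n / 2 + 1) - 3 ≤ (switches n π (g n)).card := by
  classical
  rcases Nat.eq_zero_or_pos n with rfl | hnpos
  · simp
  obtain ⟨m, hm2⟩ := hn
  have hn2 : n / 2 = m := by omega
  have hm : 1 ≤ m := by omega
  set pos : Fin n → ℕ := fun x => n - 1 - ((π.symm x : Fin n) : ℕ) with hposdef
  have posinj : Function.Injective pos := by
    intro x y h
    have hx : ((π.symm x : Fin n) : ℕ) < n := (π.symm x).isLt
    have hy : ((π.symm y : Fin n) : ℕ) < n := (π.symm y).isLt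
    have h2 : ((π.symm x : Fin n) : ℕ) = ((π.symm y : Fin n) : ℕ) := by
      simp only [hposdef] at h; omega
    exact π.symm.injective (Fin.ext h2)
  have hasg : ∀ (b : ℕ) (i : Fin n), asgOf π b i = b.testBit (pos i) := fun b i => rfl
  set A : Finset ℕ := (Finset.univ.filter fun i : Fin n => (i : ℕ) < m).image pos with hA
  set B : Finset ℕ := (Finset.univ.filter fun i : Fin n => m ≤ (i : ℕ)).image pos with hB
  have hAB : Disjoint A B := by
    rw [hA, hB, Finset.disjoint_image posinj, Finset.disjoint_left]
    intro i hi hi'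
    simp only [Finset.mem_filter, Finset.mem_univ, true_and] at hi hi'
    omega
  have hU : A ∪ B = Finset.range n := by
    rw [hA, hB, ← Finset.image_union]
    have huniv : ((Finset.univ.filter fun i : Fin n => (i : ℕ) < m) ∪
        (Finset.univ.filter fun i : Fin n => m ≤ (i : ℕ))) = Finset.univ := by
      ext i
      simp only [Finset.mem_union, Finset.mem_filter, Finset.mem_univ, true_and, iff_true]
      omega
    rw [huniv]
    ext k
    simp only [Finset.mem_image, Finset.mem_univ, true_and, Finset.mem_range]
    constructor
    · rintro ⟨x, rfl⟩
      have : ((π.symm x : Fin n) : ℕ) < n := (π.symm x).isLt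
      simp only [hposdef]
      omega
    · intro hk
      refine ⟨π ⟨n - 1 - k, by omega⟩, ?_⟩
      simp only [hposdef, Equiv.symm_apply_apply]
      omega
  have hAcard : A.card = m := by
    rw [hA, Finset.card_image_of_injective _ posinj]
    have heq : (Finset.univ.filter fun i : Fin n => (i : ℕ) < m) =
        Finset.attachFin (Finset.range m)
          (fun x hx => lt_of_lt_of_le (Finset.mem_range.mp hx) (by omega)) := by
      ext i
      simp [Finset.mem_attachFin]
    rw [heq, Finset.card_attachFin, Finset.card_range]
  have hBcard : B.card = m := by
    rw [hB, Finset.card_image_of_injective _ posinj]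
    have hpart := Finset.card_filter_add_card_filter_not
      (s := (Finset.univ : Finset (Fin n))) (p := fun i : Fin n => (i : ℕ) < m)
    have heq : (Finset.univ.filter fun i : Fin n => ¬ (i : ℕ) < m) =
        (Finset.univ.filter fun i : Fin n => m ≤ (i : ℕ)) := by
      ext i
      simp only [Finset.mem_filter, Finset.mem_univ, true_and]
      omega
    have hAcard' : (Finset.univ.filter fun i : Fin n => (i : ℕ) < m).card = m := by
      rw [hA, Finset.card_image_of_injective _ posinj] at hAcard
      exact hAcard
    rw [heq, Finset.card_univ, Fintype.card_fin, hAcard'] at hpart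
    omega
  set v : Fin n := π ⟨n - 1, by omega⟩ with hv
  have hv0 : pos v = 0 := by
    simp only [hposdef, hv, Equiv.symm_apply_apply]
    omega
  have htrans1 : ∀ b : ℕ, (∀ i : Fin n, (i : ℕ) < n / 2 → asgOf π b i = true) ↔
      (∀ k ∈ A, b.testBit k = true) := by
    intro b
    rw [hn2]
    constructor
    · intro h k hk
      rw [hA] at hk
      simp only [Finset.mem_image, Finset.mem_filter, Finset.mem_univ, true_and] at hk
      obtain ⟨i, hi, rfl⟩ := hk
      rw [← hasg]
      exact h i hi
    · intro h i hi
      rw [hasg]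
      exact h (pos i) (by
        rw [hA]
        exact Finset.mem_image_of_mem _ (by simp [hi]))
  have htrans2 : ∀ b : ℕ, (∀ i : Fin n, n / 2 ≤ (i : ℕ) → asgOf π b i = true) ↔
      (∀ k ∈ B, b.testBit k = true) := by
    intro b
    rw [hn2]
    constructor
    · intro h k hk
      rw [hB] at hk
      simp only [Finset.mem_image, Finset.mem_filter, Finset.mem_univ, true_and] at hk
      obtain ⟨i, hi, rfl⟩ := hk
      rw [← hasg]
      exact h i hi
    · intro h i hi
      rw [hasg]
      exact h (pos i) (by
        rw [hB]
        exact Finset.mem_image_of_mem _ (by simp [hi]))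
  have hg : ∀ b : ℕ, g n (asgOf π b) =
      ((decide (∀ i : Fin n, (i : ℕ) < n / 2 → asgOf π b i = true)) ||
       (decide (∀ i : Fin n, n / 2 ≤ (i : ℕ) → asgOf π b i = true))) := fun b => rfl
  rw [hn2]
  unfold switches
  by_cases hvm : (v : ℕ) < m
  · -- bit 0 belongs to the first half: PP := B, QQ := A
    have h0A : 0 ∈ A := by
      rw [hA, ← hv0]
      exact Finset.mem_image_of_mem _ (by simp [hvm])
    exact core hm B A (fun b => g n (asgOf π b)) hAB.symm
      (by rw [Finset.union_comm]; exact hU) hBcard h0A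
      (fun b => by
        show g n (asgOf π b) = _
        rw [hg b, Bool.or_comm]
        congr 1
        · exact decide_eq_decide.mpr (htrans2 b)
        · exact decide_eq_decide.mpr (htrans1 b))
  · -- bit 0 belongs to the second half: PP := A, QQ := B
    have h0B : 0 ∈ B := by
      rw [hB, ← hv0]
      exact Finset.mem_image_of_mem _ (by simp; omega)
    exact core hm A B (fun b => g n (asgOf π b)) hAB hU hAcard h0B
      (fun b => by
        show g n (asgOf π b) = _
        rw [hg b]
        congr 1
        · exact decide_eq_decide.mpr (htrans1 b)
        · exact decide_eq_decide.mpr (htrans2 b))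
end

section
/- Under the lexicographic identification with respect to a permutation π, the models of f_1 = (⋀_{i=1}^{n/2} x_i) ∨ (⋀_{i=1}^n ¬x_i) other than the all-zero assignment form exactly the interval [Σ_{j=n/2+1}^{n} 2^{j−1}, 2^n − 1] of numbers, provided π places x_1,...,x_{n/2} after x_{n/2+1},...,x_n in significance (i.e., x_1,...,x_{n/2} occupy the high-order positions). -/
/-- `f₁ = (⋀_{i=1}^{n/2} xᵢ) ∨ (⋀_{i=1}^{n} ¬xᵢ)` (variables indexed `0,…,n-1`). -/
def f1 (n : ℕ) : (Fin n → Bool) → Bool := fun a =>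
  (decide (∀ i : Fin n, (i : ℕ) < n / 2 → a i = true)) ||
  (decide (∀ i : Fin n, a i = false))

lemma sum_range_two_pow (k : ℕ) : ∑ j ∈ Finset.range k, 2 ^ j = 2 ^ k - 1 := by
  induction k with
  | zero => simp
  | succ k ih =>
    rw [Finset.sum_range_succ, ih]
    have h1 : 1 ≤ 2 ^ k := Nat.one_le_two_pow
    have h2 : 2 ^ (k + 1) = 2 ^ k + 2 ^ k := by ring
    omega

lemma sum_Ico_two_pow {m n : ℕ} (h : m ≤ n) :
    ∑ j ∈ Finset.Ico m n, 2 ^ j = 2 ^ n - 2 ^ m := by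
  have key : ∑ j ∈ Finset.range m, 2 ^ j + ∑ j ∈ Finset.Ico m n, 2 ^ j
      = ∑ j ∈ Finset.range n, 2 ^ j := by
    rw [Finset.range_eq_Ico, Finset.range_eq_Ico]
    exact Finset.sum_Ico_consecutive (fun j : ℕ => (2:ℕ) ^ j) (Nat.zero_le m) h
  have h1 := sum_range_two_pow m
  have h2 := sum_range_two_pow n
  have hm : 1 ≤ 2 ^ m := Nat.one_le_two_pow
  have hmn : 2 ^ m ≤ 2 ^ n := Nat.pow_le_pow_right (by norm_num) h
  omega

lemma high_bits_iff {m n b : ℕ} (hmn : m ≤ n) (hb : b < 2 ^ n) :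
    (∀ j, m ≤ j → j < n → b.testBit j = true) ↔ 2 ^ n - 2 ^ m ≤ b := by
  have hpos : 0 < 2 ^ m := Nat.pow_pos (by norm_num)
  have hpow : 2 ^ (n - m) * 2 ^ m = 2 ^ n := by
    rw [← pow_add]; congr 1; omega
  have hq : b / 2 ^ m < 2 ^ (n - m) := by
    rw [Nat.div_lt_iff_lt_mul hpos, hpow]; exact hb
  have key : (∀ j, m ≤ j → j < n → b.testBit j = true) ↔ b / 2 ^ m = 2 ^ (n - m) - 1 := by
    constructor
    · intro h
      apply Nat.eq_of_testBit_eq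
      intro i
      rw [Nat.testBit_two_pow_sub_one]
      by_cases hi : i < n - m
      · have := h (m + i) (by omega) (by omega)
        rw [← Nat.shiftRight_eq_div_pow, Nat.testBit_shiftRight, this]
        simp [hi]
      · have : b / 2 ^ m < 2 ^ i := lt_of_lt_of_le hq (Nat.pow_le_pow_right (by norm_num) (by omega))
        rw [Nat.testBit_lt_two_pow this]
        simp [hi]
    · intro h j hj1 hj2
      have : b.testBit j = (b / 2 ^ m).testBit (j - m) := by
        rw [← Nat.shiftRight_eq_div_pow, Nat.testBit_shiftRight]
        congr 1; omega
      rw [this, h, Nat.testBit_two_pow_sub_one]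
      simp; omega
  rw [key]
  have hle : 2 ^ n - 2 ^ m ≤ b ↔ 2 ^ (n - m) - 1 ≤ b / 2 ^ m := by
    rw [Nat.le_div_iff_mul_le hpos, Nat.sub_mul, one_mul, hpow]
  rw [hle]
  omega

/-- If `π` gives `x₁,…,x_{n/2}` the most significant positions, then the
nonzero models of `f₁` form exactly the interval `[∑_{j=n/2+1}^{n} 2^(j-1), 2^n - 1]`. -/
theorem f1_models_interval {n : ℕ} (hn : Even n) (π : Equiv.Perm (Fin n))
    (hπ : ∀ i : Fin n, ((π i : ℕ) < n / 2 ↔ (i : ℕ) < n / 2))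
    (b : ℕ) (hb : b < 2 ^ n) (hb0 : 0 < b) :
    f1 n (asgOf π b) = true ↔ (∑ j ∈ Finset.Ico (n / 2) n, 2 ^ j) ≤ b := by
  have hn0 : 0 < n := by
    rcases Nat.eq_zero_or_pos n with h | h
    · subst h; simp at hb; omega
    · exact h
  have hhalf : n / 2 + n / 2 = n := by
    obtain ⟨k, hk⟩ := hn; omega
  rw [sum_Ico_two_pow (by omega)]
  rw [← high_bits_iff (by omega) hb]
  -- not all false, since b > 0
  have hnaf : ¬ (∀ i : Fin n, asgOf π b i = false) := by
    intro h
    have : b = 0 := by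
      apply Nat.eq_of_testBit_eq
      intro i
      simp only [Nat.zero_testBit]
      by_cases hi : i < n
      · have := h (π ⟨n - 1 - i, by omega⟩)
        simpa [asgOf, Nat.sub_sub_self (by omega : i ≤ n - 1)] using this
      · exact Nat.testBit_lt_two_pow (lt_of_lt_of_le hb (Nat.pow_le_pow_right (by norm_num) (by omega)))
    omega
  simp only [f1, Bool.or_eq_true, decide_eq_true_eq]
  constructor
  · rintro (h | h)
    · intro j hj1 hj2
      have hlt : n - 1 - j < n / 2 := by omega
      have := h (π ⟨n - 1 - j, by omega⟩) (by rw [hπ]; exact hlt)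
      simpa [asgOf, show n - 1 - (n - 1 - j) = j by omega] using this
    · exact absurd h hnaf
  · intro h
    left
    intro x hx
    have hsx : ((π.symm x : Fin n) : ℕ) < n / 2 := by
      have := hπ (π.symm x)
      simp at this
      rw [← this]; exact hx
    have := h (n - 1 - (π.symm x : ℕ)) (by omega) (by omega)
    simpa [asgOf] using this
end
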